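/- Let S ⊆ ℝⁿ be convex and compact with diameter diam_p(S) = max_{x,y∈S} ‖x−y‖_p, f differentiable, h convex, λ > 0, p > 1 with conjugate q. Define U(x; z) = f(z) + ∇f(z)ᵀ(x − z) + (λ/2)‖x − z‖_p^p + h(x), let z_U minimize U(·; z) over S, and ΔU_z = U(z; z) − U(z_U; z). If ΔU_z ≤ (1/2)(ε/(diam_p(S) λ^{1/p}))^q and ε ≤ diam_p(S)^p λ, then z is an ε-stationary point: ∇f(z)ᵀ(y − z) + h(y) − h(z) ≥ −ε for all y ∈ S. -/

import Mathlib

set_option maxHeartbeats 1000000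

open scoped RealInnerProductSpace

noncomputable def lpNorm {n : ℕ} (p : ℝ) (x : EuclideanSpace ℝ (Fin n)) : ℝ :=
  (∑ i, |x i| ^ p) ^ (1 / p)

lemma lpNorm_nonneg {n : ℕ} (p : ℝ) (x : EuclideanSpace ℝ (Fin n)) : 0 ≤ lpNorm p x := by
  unfold lpNorm
  apply Real.rpow_nonneg
  exact Finset.sum_nonneg fun i _ => Real.rpow_nonneg (abs_nonneg _) _

lemma lpNorm_zero {n : ℕ} {p : ℝ} (hp : p ≠ 0) : lpNorm p (0 : EuclideanSpace ℝ (Fin n)) = 0 := by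
  unfold lpNorm
  simp [Real.zero_rpow hp]
  exact Real.zero_rpow (inv_ne_zero hp)

lemma lpNorm_smul {n : ℕ} {p a : ℝ} (hp : 0 < p) (ha : 0 ≤ a) (x : EuclideanSpace ℝ (Fin n)) :
    lpNorm p (a • x) = a * lpNorm p x := by
  unfold lpNorm
  have h1 : ∀ i, |(a • x) i| ^ p = a ^ p * |x i| ^ p := by
    intro i
    have : (a • x) i = a * x i := rfl
    rw [this, abs_mul, abs_of_nonneg ha, Real.mul_rpow ha (abs_nonneg _)]
  simp_rw [h1, ← Finset.mul_sum]
  rw [Real.mul_rpow (Real.rpow_nonneg ha p) (Finset.sum_nonneg fun i _ => Real.rpow_nonneg (abs_nonneg _) _),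
    ← Real.rpow_mul ha, mul_one_div, div_self hp.ne', Real.rpow_one]

lemma lpNorm_eq_zero {n : ℕ} {p : ℝ} (hp : 0 < p) {x : EuclideanSpace ℝ (Fin n)}
    (hx : lpNorm p x = 0) : x = 0 := by
  unfold lpNorm at hx
  have hs : (∑ i, |x i| ^ p) = 0 := by
    rcases Real.rpow_eq_zero_iff_of_nonneg (Finset.sum_nonneg fun i _ => Real.rpow_nonneg (abs_nonneg _) _) |>.mp hx with ⟨h1, _⟩
    exact h1
  have := (Finset.sum_eq_zero_iff_of_nonneg (fun i _ => Real.rpow_nonneg (abs_nonneg _) p)).mp hs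
  refine PiLp.ext fun i => ?_
  have hi := this i (Finset.mem_univ i)
  have : |x i| = 0 := by
    by_contra hne
    have : (0:ℝ) < |x i| := lt_of_le_of_ne (abs_nonneg _) (Ne.symm hne)
    exact absurd hi (ne_of_gt (Real.rpow_pos_of_pos this p))
  simpa [abs_eq_zero] using this

lemma key_rpow {p q eps lam D : ℝ} (hp : 1 < p) (hq : q = p / (p - 1))
    (he : 0 < eps) (hl : 0 < lam) (hd : 0 < D) :
    (eps / (D * lam ^ (1 / p))) ^ q = eps * (eps / (lam * D ^ p)) ^ (1 / (p - 1)) := by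
  have hp0 : (0:ℝ) < p := lt_trans one_pos hp
  have hp1 : (0:ℝ) < p - 1 := by linarith
  have hb1 : (0:ℝ) < eps / (D * lam ^ (1 / p)) := by positivity
  have hb2 : (0:ℝ) < eps / (lam * D ^ p) := by positivity
  have hL : (0:ℝ) < (eps / (D * lam ^ (1 / p))) ^ q := Real.rpow_pos_of_pos hb1 q
  have hR : (0:ℝ) < eps * (eps / (lam * D ^ p)) ^ (1 / (p - 1)) := by
    positivity
  apply Real.log_injOn_pos (Set.mem_Ioi.mpr hL) (Set.mem_Ioi.mpr hR)
  rw [Real.log_rpow hb1, Real.log_mul he.ne' (Real.rpow_pos_of_pos hb2 _).ne',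
    Real.log_rpow hb2, Real.log_div he.ne' (by positivity),
    Real.log_div he.ne' (by positivity),
    Real.log_mul hd.ne' (Real.rpow_pos_of_pos hl _).ne',
    Real.log_mul hl.ne' (Real.rpow_pos_of_pos hd _).ne',
    Real.log_rpow hl, Real.log_rpow hd]
  subst hq
  field_simp
  ring

lemma core_lem {n : ℕ} {S : Set (EuclideanSpace ℝ (Fin n))}
    (hS : Convex ℝ S)
    {f h : EuclideanSpace ℝ (Fin n) → ℝ} {g : EuclideanSpace ℝ (Fin n) → EuclideanSpace ℝ (Fin n)}
    (hh : ConvexOn ℝ Set.univ h)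
    {p q lam : ℝ} (hp : 1 < p) (hq : q = p / (p - 1)) (hlam : 0 < lam)
    {D : ℝ} (hD : ∀ d ∈ {d : ℝ | ∃ u ∈ S, ∃ v ∈ S, d = lpNorm p (u - v)}, d ≤ D)
    {z zU : EuclideanSpace ℝ (Fin n)} (hz : z ∈ S) (hzU : zU ∈ S)
    (hmin : IsMinOn (fun x => f z + ⟪g z, x - z⟫ + lam / 2 * lpNorm p (x - z) ^ p + h x) S zU)
    {eps : ℝ} (heps0 : 0 < eps) (hD0 : 0 < D) (heps : eps ≤ D ^ p * lam)
    (hΔ : (f z + ⟪g z, z - z⟫ + lam / 2 * lpNorm p (z - z) ^ p + h z)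
            - (f z + ⟪g z, zU - z⟫ + lam / 2 * lpNorm p (zU - z) ^ p + h zU)
          ≤ 1 / 2 * (eps / (D * lam ^ (1 / p))) ^ q) :
    ∀ y ∈ S, ⟪g z, y - z⟫ + h y - h z ≥ -eps := by
  intro y hy
  have hp0 : (0:ℝ) < p := lt_trans one_pos hp
  have hp1 : (0:ℝ) < p - 1 := by linarith
  set α : ℝ := (eps / (lam * D ^ p)) ^ (1 / (p - 1)) with hαdef
  have hbase : (0:ℝ) < eps / (lam * D ^ p) := by positivity
  have hα0 : 0 < α := Real.rpow_pos_of_pos hbase _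
  have hbase1 : eps / (lam * D ^ p) ≤ 1 := by
    rw [div_le_one (by positivity)]; linarith [heps]
  have hα1 : α ≤ 1 := Real.rpow_le_one hbase.le hbase1 (by positivity)
  have hαp1 : α ^ (p - 1) = eps / (lam * D ^ p) := by
    rw [hαdef, ← Real.rpow_mul hbase.le, one_div, inv_mul_cancel₀ hp1.ne', Real.rpow_one]
  have hαp : α ^ p = α * α ^ (p - 1) := by
    have := Real.rpow_add hα0 1 (p - 1)
    rw [Real.rpow_one, show (1:ℝ) + (p - 1) = p by ring] at this
    exact this
  -- the point xα
  set w : EuclideanSpace ℝ (Fin n) := y - z with hw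
  set xα : EuclideanSpace ℝ (Fin n) := z + α • w with hxα
  have hxαS : xα ∈ S := by
    have : (1 - α) • z + α • y = xα := by rw [hxα, hw]; module
    rw [← this]
    exact hS hz hy (by linarith) hα0.le (by ring)
  -- distances
  set T : ℝ := lpNorm p w with hT
  have hT0 : 0 ≤ T := lpNorm_nonneg p w
  have hTD : T ≤ D := hD _ ⟨y, hy, z, hz, rfl⟩
  have hxαz : xα - z = α • w := by rw [hxα]; abel
  have hlpxα : lpNorm p (xα - z) = α * T := by rw [hxαz, lpNorm_smul hp0 hα0.le]
  -- simplify hΔ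
  have hzz : z - z = (0 : EuclideanSpace ℝ (Fin n)) := sub_self z
  rw [hzz, lpNorm_zero hp0.ne', inner_zero_right, Real.zero_rpow hp0.ne'] at hΔ
  set δ : ℝ := 1 / 2 * (eps / (D * lam ^ (1 / p))) ^ q with hδdef
  have hΔ' : h z - δ ≤ ⟪g z, zU - z⟫ + lam / 2 * lpNorm p (zU - z) ^ p + h zU := by
    linarith [hΔ]
  -- minimality
  have hminx := hmin hxαS
  simp only [Set.mem_setOf_eq] at hminx
  rw [hlpxα] at hminx
  have hinner : ⟪g z, xα - z⟫ = α * ⟪g z, w⟫ := by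
    rw [hxαz, real_inner_smul_right]
  rw [hinner] at hminx
  -- convexity of h
  have hconv : h xα ≤ (1 - α) * h z + α * h y := by
    have := hh.2 (Set.mem_univ z) (Set.mem_univ y) (by linarith : (0:ℝ) ≤ 1 - α) hα0.le
      (by ring)
    have hxeq : (1 - α) • z + α • y = xα := by rw [hxα, hw]; module
    rw [hxeq] at this
    simpa using this
  -- (αT)^p = α^p T^p
  have hmulrpow : (α * T) ^ p = α ^ p * T ^ p := Real.mul_rpow hα0.le hT0
  rw [hmulrpow] at hminx
  -- T^p ≤ D^p
  have hTp : T ^ p ≤ D ^ p := Real.rpow_le_rpow hT0 hTD hp0.le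
  have hαppos : 0 ≤ α ^ p := (Real.rpow_pos_of_pos hα0 p).le
  -- δ = eps * α / 2
  have hδ : δ = eps * α / 2 := by
    rw [hδdef, key_rpow hp hq heps0 hlam hD0, ← hαdef]; ring
  clear_value α δ T
  -- λ/2 * α^p * D^p = α * eps / 2... : α^p * D^p * lam = α * eps
  have hkey2 : lam / 2 * (α ^ p * D ^ p) ≤ α * eps / 2 := by
    rw [hαp, hαp1]
    have hDp : (0:ℝ) < D ^ p := Real.rpow_pos_of_pos hD0 p
    rw [div_mul_eq_mul_div, mul_comm lam, mul_div_assoc]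
    have : α * (eps / (lam * D ^ p)) * D ^ p * (lam / 2) = α * eps / 2 := by
      field_simp
    linarith [this.le]
  -- combine
  have hchain : h z - δ ≤ α * ⟪g z, w⟫ + lam / 2 * (α ^ p * T ^ p) + ((1 - α) * h z + α * h y) := by
    calc h z - δ ≤ ⟪g z, zU - z⟫ + lam / 2 * lpNorm p (zU - z) ^ p + h zU := hΔ'
    _ ≤ f z + (α * ⟪g z, w⟫) + lam / 2 * (α ^ p * T ^ p) + h xα - f z := by linarith [hminx]
    _ ≤ _ := by linarith [hconv]
  have hmain : α * (⟪g z, w⟫ + h y - h z) ≥ -δ - lam / 2 * (α ^ p * D ^ p) := by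
    have h1 : lam / 2 * (α ^ p * T ^ p) ≤ lam / 2 * (α ^ p * D ^ p) := by
      apply mul_le_mul_of_nonneg_left _ (by positivity)
      exact mul_le_mul_of_nonneg_left hTp hαppos
    nlinarith [hchain, h1]
  clear_value w xα
  have : α * (⟪g z, w⟫ + h y - h z) ≥ -(eps * α) := by
    rw [hδ] at hmain
    linarith [hmain, hkey2]
  have hfinal : ⟪g z, w⟫ + h y - h z ≥ -eps := by
    have h2 := (mul_le_mul_iff_right₀ hα0).mp (show α * (-eps) ≤ α * (⟪g z, w⟫ + h y - h z) from by linarith [this])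
    linarith [h2]
  simpa [hw] using hfinal


theorem stmt_9 {n : ℕ} {S : Set (EuclideanSpace ℝ (Fin n))}
    (hS : Convex ℝ S) (hScpt : IsCompact S)
    {f h : EuclideanSpace ℝ (Fin n) → ℝ} {g : EuclideanSpace ℝ (Fin n) → EuclideanSpace ℝ (Fin n)}
    (hf : ∀ x, HasGradientAt f (g x) x)
    (hh : ConvexOn ℝ Set.univ h)
    {p q lam : ℝ} (hp : 1 < p) (hpq : 1 / p + 1 / q = 1) (hlam : 0 < lam)
    {D : ℝ} (hD : IsGreatest {d : ℝ | ∃ u ∈ S, ∃ v ∈ S, d = lpNorm p (u - v)} D)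
    {z zU : EuclideanSpace ℝ (Fin n)} (hz : z ∈ S) (hzU : zU ∈ S)
    (hmin : IsMinOn (fun x => f z + ⟪g z, x - z⟫ + lam / 2 * lpNorm p (x - z) ^ p + h x) S zU)
    {eps : ℝ} (heps0 : 0 ≤ eps) (heps : eps ≤ D ^ p * lam)
    (hΔ : (f z + ⟪g z, z - z⟫ + lam / 2 * lpNorm p (z - z) ^ p + h z)
            - (f z + ⟪g z, zU - z⟫ + lam / 2 * lpNorm p (zU - z) ^ p + h zU)
          ≤ 1 / 2 * (eps / (D * lam ^ (1 / p))) ^ q) :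
    ∀ y ∈ S, ⟪g z, y - z⟫ + h y - h z ≥ -eps := by
  have hp0 : (0:ℝ) < p := lt_trans one_pos hp
  have hp1 : (0:ℝ) < p - 1 := by linarith
  -- derive q = p / (p - 1)
  have hq0 : q ≠ 0 := by
    intro hq0
    rw [hq0, div_zero, add_zero] at hpq
    rw [div_eq_one_iff_eq (by positivity : p ≠ 0)] at hpq
    linarith
  have hq : q = p / (p - 1) := by
    have hpne : p ≠ 0 := hp0.ne'
    field_simp at hpq ⊢
    linarith
  have hqpos : 0 < q := by rw [hq]; positivity
  have hD0 : 0 ≤ D := by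
    have h0mem : (0:ℝ) ∈ {d : ℝ | ∃ u ∈ S, ∃ v ∈ S, d = lpNorm p (u - v)} :=
      ⟨z, hz, z, hz, by rw [sub_self, lpNorm_zero hp0.ne']⟩
    exact hD.2 h0mem
  intro y hy
  -- Case D = 0 : y = z
  rcases eq_or_lt_of_le hD0 with hDeq | hDpos
  · have hyz : y - z = 0 := by
      apply lpNorm_eq_zero hp0
      have h1 : lpNorm p (y - z) ≤ D := hD.2 ⟨y, hy, z, hz, rfl⟩
      have h2 : 0 ≤ lpNorm p (y - z) := lpNorm_nonneg p _
      linarith [hDeq]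
    have hyz' : y = z := sub_eq_zero.mp hyz
    rw [hyz, inner_zero_right, hyz']
    simp
    linarith
  · -- D > 0
    rcases eq_or_lt_of_le heps0 with hepseq | hepspos
    · -- eps = 0 : use eps' trick
      subst hepseq
      by_contra hφ
      push_neg at hφ
      rw [neg_zero] at hφ
      set φ : ℝ := ⟪g z, y - z⟫ + h y - h z with hφdef
      have hDp : (0:ℝ) < D ^ p := Real.rpow_pos_of_pos hDpos p
      set eps' : ℝ := min (-φ / 2) (D ^ p * lam) with heps'def
      have heps'0 : 0 < eps' := lt_min (by linarith) (by positivity)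
      have heps' : eps' ≤ D ^ p * lam := min_le_right _ _
      have hΔ0 : (f z + ⟪g z, z - z⟫ + lam / 2 * lpNorm p (z - z) ^ p + h z)
            - (f z + ⟪g z, zU - z⟫ + lam / 2 * lpNorm p (zU - z) ^ p + h zU) ≤ 0 := by
        have : ((0:ℝ) / (D * lam ^ (1 / p))) ^ q = 0 := by
          rw [zero_div, Real.zero_rpow hq0]
        linarith [hΔ, this.symm ▸ hΔ]
      have hΔ' : (f z + ⟪g z, z - z⟫ + lam / 2 * lpNorm p (z - z) ^ p + h z)
            - (f z + ⟪g z, zU - z⟫ + lam / 2 * lpNorm p (zU - z) ^ p + h zU)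
          ≤ 1 / 2 * (eps' / (D * lam ^ (1 / p))) ^ q := by
        have hpos : (0:ℝ) ≤ 1 / 2 * (eps' / (D * lam ^ (1 / p))) ^ q := by positivity
        linarith
      have := core_lem hS hh hp hq hlam hD.2 hz hzU hmin heps'0 hDpos heps' hΔ' y hy
      have h2 : eps' ≤ -φ / 2 := min_le_left _ _
      rw [← hφdef] at this
      linarith
    · -- eps > 0
      exact core_lem hS hh hp hq hlam hD.2 hz hzU hmin hepspos hDpos heps hΔ y hy
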